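/- Let G be a smooth real-valued function on an open interval I ⊆ ℝ with G'' nowhere vanishing on I, and suppose the Monge expression vanishes identically: 40 G'''(p)³ − 45 G''(p) G'''(p) G''''(p) + 9 G''(p)² G'''''(p) = 0 for all p ∈ I. Then every point of I has an open neighborhood J ⊆ I on which the graph of G is contained in a conic: there exist real constants (a₁, a₂, a₃, a₄, a₅, a₆) ≠ (0,0,0,0,0,0) such that a₁ G(p)² + 2 a₂ p G(p) + a₃ p² + a₄ G(p) + a₅ p + a₆ = 0 for all p ∈ J. -/

import Mathlib

open Real Set

/-- constancy helper -/
lemma mongeAux_const {I : Set ℝ} (hI : IsOpen I) (hI' : Convex ℝ I) {F : ℝ → ℝ}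
    (hF : ∀ p ∈ I, HasDerivAt F 0 p) {x y : ℝ} (hx : x ∈ I) (hy : y ∈ I) : F x = F y := by
  refine hI'.is_const_of_fderivWithin_eq_zero
    (fun p hp => ((hF p hp).differentiableAt).differentiableWithinAt) (fun p hp => ?_) hx hy
  rw [fderivWithin_of_isOpen hI hp]
  have := (hF p hp).hasFDerivAt
  rw [this.fderiv]; ext; simp

/-- transfer HasDerivAt along equality on an open set -/
lemma mongeAux_congr {I : Set ℝ} (hI : IsOpen I) {F₁ F₂ : ℝ → ℝ}
    (h : ∀ p ∈ I, F₁ p = F₂ p) {p : ℝ} (hp : p ∈ I) {d : ℝ} (hd : HasDerivAt F₁ d p) :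
    HasDerivAt F₂ d p :=
  hd.congr_of_eventuallyEq
    (Filter.eventuallyEq_of_mem (hI.mem_nhds hp) (fun x hx => (h x hx).symm))


lemma mongeAux_quadratic {I : Set ℝ} (hI : IsOpen I) (hI' : Convex ℝ I) {G : ℝ → ℝ}
    (hG : ContDiffOn ℝ (⊤ : ℕ∞) G I)
    (hnd : ∀ p ∈ I, deriv (deriv G) p ≠ 0)
    (hmonge : ∀ p ∈ I, 40 * (deriv (deriv (deriv G)) p) ^ 3
      - 45 * deriv (deriv G) p * deriv (deriv (deriv G)) p
          * deriv (deriv (deriv (deriv G))) p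
      + 9 * (deriv (deriv G) p) ^ 2 * deriv (deriv (deriv (deriv (deriv G)))) p = 0) :
    ∃ α β γ : ℝ, ∀ p ∈ I,
      (α * p ^ 2 + β * p + γ) > 0 ∧
      (deriv (deriv G) p) ^ 2 * (α * p ^ 2 + β * p + γ) ^ 3 = 1 ∧
      2 * deriv (deriv (deriv G)) p * (α * p ^ 2 + β * p + γ)
        + 3 * deriv (deriv G) p * (2 * α * p + β) = 0 := by
  rcases Set.eq_empty_or_nonempty I with hIe | ⟨p₀, hp₀⟩
  · exact ⟨0, 0, 1, by simp [hIe]⟩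
  set h : ℝ → ℝ := deriv (deriv G) with hh_def
  set h1 : ℝ → ℝ := deriv h with hh1_def
  set h2 : ℝ → ℝ := deriv h1 with hh2_def
  set h3 : ℝ → ℝ := deriv h2 with hh3_def
  have hG1 : ContDiffOn ℝ (⊤ : ℕ∞) (deriv G) I := hG.deriv_of_isOpen hI (by exact_mod_cast le_top)
  have hh : ContDiffOn ℝ (⊤ : ℕ∞) h I := hG1.deriv_of_isOpen hI (by exact_mod_cast le_top)
  have hh1 : ContDiffOn ℝ (⊤ : ℕ∞) h1 I := hh.deriv_of_isOpen hI (by exact_mod_cast le_top)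
  have hh2 : ContDiffOn ℝ (⊤ : ℕ∞) h2 I := hh1.deriv_of_isOpen hI (by exact_mod_cast le_top)
  have dh : ∀ p ∈ I, HasDerivAt h (h1 p) p := fun p hp =>
    ((hh.differentiableOn (by simp)).differentiableAt (hI.mem_nhds hp)).hasDerivAt
  have dh1 : ∀ p ∈ I, HasDerivAt h1 (h2 p) p := fun p hp =>
    ((hh1.differentiableOn (by simp)).differentiableAt (hI.mem_nhds hp)).hasDerivAt
  have dh2 : ∀ p ∈ I, HasDerivAt h2 (h3 p) p := fun p hp =>
    ((hh2.differentiableOn (by simp)).differentiableAt (hI.mem_nhds hp)).hasDerivAt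
  set w : ℝ → ℝ := fun p => (h p ^ 2) ^ (-(1/3) : ℝ) with hw_def
  have hwpos : ∀ p ∈ I, 0 < w p := fun p hp =>
    Real.rpow_pos_of_pos (by have := hnd p hp; positivity) _
  have hww : ∀ p ∈ I, h p ^ 2 * w p ^ 3 = 1 := by
    intro p hp
    have hb : (0:ℝ) < h p ^ 2 := by have := hnd p hp; positivity
    have : w p ^ 3 = (h p ^ 2)⁻¹ := by
      rw [hw_def]
      rw [← Real.rpow_natCast ((h p ^ 2) ^ (-(1/3) : ℝ)) 3, ← Real.rpow_mul hb.le]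
      norm_num [Real.rpow_neg_one]
    rw [this, mul_inv_cancel₀ hb.ne']
  have hw : ContDiffOn ℝ (⊤ : ℕ∞) w I :=
    (hh.pow 2).rpow_const_of_ne (fun p hp => pow_ne_zero 2 (hnd p hp))
  set w1 : ℝ → ℝ := deriv w with hw1_def
  set w2 : ℝ → ℝ := deriv w1 with hw2_def
  set w3 : ℝ → ℝ := deriv w2 with hw3_def
  have hw1 : ContDiffOn ℝ (⊤ : ℕ∞) w1 I := hw.deriv_of_isOpen hI (by exact_mod_cast le_top)
  have hw2 : ContDiffOn ℝ (⊤ : ℕ∞) w2 I := hw1.deriv_of_isOpen hI (by exact_mod_cast le_top)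
  have dw : ∀ p ∈ I, HasDerivAt w (w1 p) p := fun p hp =>
    ((hw.differentiableOn (by simp)).differentiableAt (hI.mem_nhds hp)).hasDerivAt
  have dw1 : ∀ p ∈ I, HasDerivAt w1 (w2 p) p := fun p hp =>
    ((hw1.differentiableOn (by simp)).differentiableAt (hI.mem_nhds hp)).hasDerivAt
  have dw2 : ∀ p ∈ I, HasDerivAt w2 (w3 p) p := fun p hp =>
    ((hw2.differentiableOn (by simp)).differentiableAt (hI.mem_nhds hp)).hasDerivAt
  have E1 : ∀ p ∈ I, 2 * h1 p * w p + 3 * h p * w1 p = 0 := by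
    intro p hp
    have dprod : HasDerivAt (fun x => h x ^ 2 * w x ^ 3)
        (2 * h p * h1 p * w p ^ 3 + h p ^ 2 * (3 * w p ^ 2 * w1 p)) p := by
      have := (((dh p hp).pow 2).mul ((dw p hp).pow 3))
      refine this.congr_deriv (Eq.symm ?_); push_cast; simp only [Pi.pow_apply]; ring
    have dconst : HasDerivAt (fun x => h x ^ 2 * w x ^ 3) 0 p :=
      mongeAux_congr hI (fun x hx => (hww x hx).symm) hp (hasDerivAt_const p 1)
    have raw := dprod.unique dconst
    have hne : h p * w p ^ 2 ≠ 0 := by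
      have := hnd p hp; have := hwpos p hp; positivity
    apply mul_left_cancel₀ hne
    linear_combination raw
  have E2 : ∀ p ∈ I, 2 * h2 p * w p + 5 * h1 p * w1 p + 3 * h p * w2 p = 0 := by
    intro p hp
    have dprod : HasDerivAt (fun x => 2 * h1 x * w x + 3 * h x * w1 x)
        (2 * h2 p * w p + 5 * h1 p * w1 p + 3 * h p * w2 p) p := by
      have := (((dh1 p hp).const_mul 2).mul (dw p hp)).add
        (((dh p hp).const_mul 3).mul (dw1 p hp))
      refine this.congr_deriv (Eq.symm ?_); ring
    have dconst : HasDerivAt (fun x => 2 * h1 x * w x + 3 * h x * w1 x) 0 p :=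
      mongeAux_congr hI (fun x hx => (E1 x hx).symm) hp (hasDerivAt_const p 0)
    exact dprod.unique dconst
  have E3 : ∀ p ∈ I, 2 * h3 p * w p + 7 * h2 p * w1 p + 8 * h1 p * w2 p + 3 * h p * w3 p = 0 := by
    intro p hp
    have dprod : HasDerivAt (fun x => 2 * h2 x * w x + 5 * h1 x * w1 x + 3 * h x * w2 x)
        (2 * h3 p * w p + 7 * h2 p * w1 p + 8 * h1 p * w2 p + 3 * h p * w3 p) p := by
      have := ((((dh2 p hp).const_mul 2).mul (dw p hp)).add
        (((dh1 p hp).const_mul 5).mul (dw1 p hp))).add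
        (((dh p hp).const_mul 3).mul (dw2 p hp))
      refine this.congr_deriv (Eq.symm ?_); ring
    have dconst : HasDerivAt (fun x => 2 * h2 x * w x + 5 * h1 x * w1 x + 3 * h x * w2 x) 0 p :=
      mongeAux_congr hI (fun x hx => (E2 x hx).symm) hp (hasDerivAt_const p 0)
    exact dprod.unique dconst
  have hw3z : ∀ p ∈ I, w3 p = 0 := by
    intro p hp
    have key : 27 * h p ^ 3 * w3 p = 0 := by
      linear_combination 9 * h p ^ 2 * (E3 p hp) - 24 * h p * h1 p * (E2 p hp)
        + (40 * h1 p ^ 2 - 21 * h p * h2 p) * (E1 p hp) - 2 * w p * (hmonge p hp)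
    have hne : 27 * h p ^ 3 ≠ 0 := by have := hnd p hp; positivity
    exact (mul_eq_zero.mp key).resolve_left hne
  set α : ℝ := w2 p₀ / 2 with hα_def
  set β : ℝ := w1 p₀ - 2 * α * p₀ with hβ_def
  set γ : ℝ := w p₀ - α * p₀ ^ 2 - β * p₀ with hγ_def
  have hw2c : ∀ p ∈ I, w2 p = 2 * α := by
    intro p hp
    have := mongeAux_const hI hI' (F := w2)
      (fun x hx => (hw3z x hx) ▸ (dw2 x hx)) hp hp₀
    rw [this, hα_def]; ring
  have hw1l : ∀ p ∈ I, w1 p = 2 * α * p + β := by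
    intro p hp
    have key : ∀ x ∈ I, HasDerivAt (fun y => w1 y - 2 * α * y) 0 x := by
      intro x hx
      have : HasDerivAt (fun y => w1 y - 2 * α * y) (w2 x - 2 * α) x := by
        exact ((dw1 x hx).sub ((hasDerivAt_id x).const_mul (2 * α))).congr_deriv (by ring)
      rwa [hw2c x hx, sub_self] at this
    have := mongeAux_const hI hI' key hp hp₀
    rw [hβ_def]; linarith [this]
  have hwq : ∀ p ∈ I, w p = α * p ^ 2 + β * p + γ := by
    intro p hp
    have key : ∀ x ∈ I, HasDerivAt (fun y => w y - α * y ^ 2 - β * y) 0 x := by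
      intro x hx
      have : HasDerivAt (fun y => w y - α * y ^ 2 - β * y)
          (w1 x - α * (2 * x) - β) x := by
        exact ((dw x hx).sub ((hasDerivAt_pow 2 x).const_mul α |>.congr_deriv (by push_cast; ring))).sub
          ((hasDerivAt_id x).const_mul β |>.congr_deriv (by ring))
      rw [hw1l x hx] at this
      convert this using 1; ring
    have := mongeAux_const hI hI' key hp hp₀
    rw [hγ_def]; linarith [this]
  refine ⟨α, β, γ, fun p hp => ⟨?_, ?_, ?_⟩⟩
  · rw [← hwq p hp]; exact hwpos p hp
  · rw [← hwq p hp]; exact hww p hp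
  · have := E1 p hp
    rw [hwq p hp, hw1l p hp] at this
    linarith [this]


lemma mongeAux_conic {I : Set ℝ} (hI : IsOpen I) (hI' : Convex ℝ I) {G : ℝ → ℝ}
    (hG : ContDiffOn ℝ (⊤ : ℕ∞) G I)
    (hnd : ∀ p ∈ I, deriv (deriv G) p ≠ 0)
    {α β γ : ℝ}
    (hq : ∀ p ∈ I, (α * p ^ 2 + β * p + γ) > 0 ∧
      (deriv (deriv G) p) ^ 2 * (α * p ^ 2 + β * p + γ) ^ 3 = 1 ∧
      2 * deriv (deriv (deriv G)) p * (α * p ^ 2 + β * p + γ)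
        + 3 * deriv (deriv G) p * (2 * α * p + β) = 0)
    {p₀ : ℝ} (hp₀ : p₀ ∈ I) :
    ∃ a : Fin 6 → ℝ, a ≠ 0 ∧
      ∀ p ∈ I, a 0 * G p ^ 2 + 2 * a 1 * p * G p + a 2 * p ^ 2
        + a 3 * G p + a 4 * p + a 5 = 0 := by
  set g1 : ℝ → ℝ := deriv G with hg1_def
  set h : ℝ → ℝ := deriv g1 with hh_def
  set h1 : ℝ → ℝ := deriv h with hh1_def
  have hG1 : ContDiffOn ℝ (⊤ : ℕ∞) g1 I := hG.deriv_of_isOpen hI (by exact_mod_cast le_top)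
  have hh : ContDiffOn ℝ (⊤ : ℕ∞) h I := hG1.deriv_of_isOpen hI (by exact_mod_cast le_top)
  have dG : ∀ p ∈ I, HasDerivAt G (g1 p) p := fun p hp =>
    ((hG.differentiableOn (by simp)).differentiableAt (hI.mem_nhds hp)).hasDerivAt
  have dg1 : ∀ p ∈ I, HasDerivAt g1 (h p) p := fun p hp =>
    ((hG1.differentiableOn (by simp)).differentiableAt (hI.mem_nhds hp)).hasDerivAt
  have dh : ∀ p ∈ I, HasDerivAt h (h1 p) p := fun p hp =>
    ((hh.differentiableOn (by simp)).differentiableAt (hI.mem_nhds hp)).hasDerivAt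
  have hqpos : ∀ p ∈ I, 0 < α * p ^ 2 + β * p + γ := fun p hp => (hq p hp).1
  have hq1 : ∀ p ∈ I, h p ^ 2 * (α * p ^ 2 + β * p + γ) ^ 3 = 1 := fun p hp => (hq p hp).2.1
  have R : ∀ p ∈ I, 2 * h1 p * (α * p ^ 2 + β * p + γ) + 3 * h p * (2 * α * p + β) = 0 :=
    fun p hp => (hq p hp).2.2
  have dq : ∀ p : ℝ, HasDerivAt (fun x => α * x ^ 2 + β * x + γ) (2 * α * p + β) p := by
    intro p
    have := (((hasDerivAt_pow 2 p).const_mul α).add ((hasDerivAt_id p).const_mul β)).add_const γ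
    refine this.congr_deriv (Eq.symm ?_); push_cast; ring
  have dq' : ∀ p : ℝ, HasDerivAt (fun x => 2 * α * x + β) (2 * α) p := by
    intro p
    simpa using ((hasDerivAt_id p).const_mul (2 * α)).add_const β
  by_cases hD : 4 * α * γ - β ^ 2 = 0
  · by_cases hα : α = 0
    · -- q is a positive constant, G is a parabola
      have hβ : β = 0 := by
        have : β ^ 2 = 0 := by linear_combination -hD + 4 * γ * hα
        exact pow_eq_zero_iff (by norm_num) |>.mp this
      have hγ : γ ≠ 0 := by
        have := hqpos p₀ hp₀; rw [hα, hβ] at this; simp at this; linarith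
      have h1z : ∀ p ∈ I, h1 p = 0 := by
        intro p hp
        have := R p hp; rw [hα, hβ] at this; simp at this
        rcases this with h' | h'
        · exact h'
        · exact absurd h' hγ
      have hc2 : ∀ p ∈ I, h p = h p₀ := fun p hp =>
        mongeAux_const hI hI' (fun x hx => (h1z x hx) ▸ dh x hx) hp hp₀
      obtain ⟨c₂, hc₂_def⟩ : ∃ c, c = h p₀ := ⟨_, rfl⟩
      rw [← hc₂_def] at hc2
      have key1 : ∀ x ∈ I, HasDerivAt (fun y => g1 y - c₂ * y) 0 x := by
        intro x hx
        have : HasDerivAt (fun y => g1 y - c₂ * y) (h x - c₂) x := by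
          exact ((dg1 x hx).sub ((hasDerivAt_id x).const_mul c₂)).congr_deriv (by ring)
        rwa [hc2 x hx, sub_self] at this
      obtain ⟨c₁, hc₁_def⟩ : ∃ c, c = g1 p₀ - c₂ * p₀ := ⟨_, rfl⟩
      have hc1 : ∀ p ∈ I, g1 p - c₂ * p = c₁ := fun p hp =>
        (mongeAux_const hI hI' key1 hp hp₀).trans hc₁_def.symm
      have key0 : ∀ x ∈ I, HasDerivAt (fun y => 2 * G y - c₂ * y ^ 2 - 2 * c₁ * y) 0 x := by
        intro x hx
        have hg1x : g1 x = c₂ * x + c₁ := by have := hc1 x hx; linarith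
        have : HasDerivAt (fun y => 2 * G y - c₂ * y ^ 2 - 2 * c₁ * y)
            (2 * g1 x - c₂ * (2 * x) - 2 * c₁) x := by
          have := (((dG x hx).const_mul 2).sub ((hasDerivAt_pow 2 x).const_mul c₂)).sub
            ((hasDerivAt_id x).const_mul (2 * c₁))
          refine this.congr_deriv (Eq.symm ?_); push_cast; ring
        rw [hg1x] at this
        convert this using 1; ring
      obtain ⟨c₀, hc₀_def⟩ : ∃ c, c = 2 * G p₀ - c₂ * p₀ ^ 2 - 2 * c₁ * p₀ := ⟨_, rfl⟩
      have hc0 : ∀ p ∈ I, 2 * G p - c₂ * p ^ 2 - 2 * c₁ * p = c₀ := fun p hp =>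
        (mongeAux_const hI hI' key0 hp hp₀).trans hc₀_def.symm
      refine ⟨![0, 0, c₂, -2, 2 * c₁, c₀], Function.ne_iff.mpr ⟨3, ?_⟩, ?_⟩
      · show (-2 : ℝ) ≠ 0; norm_num
      · intro p hp
        show (0:ℝ) * G p ^ 2 + 2 * 0 * p * G p + c₂ * p ^ 2
          + (-2) * G p + (2 * c₁) * p + c₀ = 0
        linear_combination -(hc0 p hp)
    · -- D = 0, α ≠ 0 : degenerate conic (hyperbola branch with vertical asymptote)
      have hq'sq : ∀ p : ℝ, (2 * α * p + β) ^ 2 = 4 * α * (α * p ^ 2 + β * p + γ) := by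
        intro p; linear_combination -hD
      have hq'ne : ∀ p ∈ I, 2 * α * p + β ≠ 0 := by
        intro p hp heq
        have h4 : 4 * α * (α * p ^ 2 + β * p + γ) = 0 := by
          rw [← hq'sq p, heq]; ring
        have := hqpos p hp
        rcases mul_eq_zero.mp h4 with h' | h'
        · exact hα (by linarith [mul_eq_zero.mp h'])
        · linarith
      -- K = h q² / q' is constant
      have keyK : ∀ x ∈ I, HasDerivAt
          (fun y => h y * (α * y ^ 2 + β * y + γ) ^ 2 / (2 * α * y + β)) 0 x := by
        intro x hx
        have dnum : HasDerivAt (fun y => h y * (α * y ^ 2 + β * y + γ) ^ 2)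
            (h1 x * (α * x ^ 2 + β * x + γ) ^ 2
              + h x * (2 * (α * x ^ 2 + β * x + γ) * (2 * α * x + β))) x := by
          have := (dh x hx).mul ((dq x).pow 2)
          refine this.congr_deriv (Eq.symm ?_); push_cast; simp only [Pi.pow_apply]; ring
        have := dnum.div (dq' x) (hq'ne x hx)
        refine this.congr_deriv (Eq.symm ?_)
        rw [eq_comm, div_eq_iff (pow_ne_zero 2 (hq'ne x hx))]
        linear_combination ((1/2) * (α * x ^ 2 + β * x + γ) * (2 * α * x + β)) * (R x hx)
            + (-(1/2) * (h x) * (α * x ^ 2 + β * x + γ)) * hD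
      obtain ⟨k, hk_def⟩ : ∃ c, c = h p₀ * (α * p₀ ^ 2 + β * p₀ + γ) ^ 2 / (2 * α * p₀ + β) :=
        ⟨_, rfl⟩
      have hK : ∀ p ∈ I, h p * (α * p ^ 2 + β * p + γ) ^ 2 / (2 * α * p + β) = k := fun p hp =>
        (mongeAux_const hI hI' keyK hp hp₀).trans hk_def.symm
      have hK' : ∀ p ∈ I, h p * (α * p ^ 2 + β * p + γ) ^ 2 = k * (2 * α * p + β) := by
        intro p hp
        have := hK p hp
        rw [div_eq_iff (hq'ne p hp)] at this
        linarith [this]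
      have F1 : ∀ p ∈ I, h p * (2 * α * p + β) ^ 3 = 16 * α ^ 2 * k := by
        intro p hp
        have big : h p * (2 * α * p + β) ^ 4 = 16 * α ^ 2 * k * (2 * α * p + β) := by
          rw [show (2*α*p+β)^4 = ((2*α*p+β)^2)^2 by ring, hq'sq p]
          linear_combination 16 * α ^ 2 * (hK' p hp)
        refine mul_right_cancel₀ (hq'ne p hp) ?_
        linear_combination big
      -- A = g1 + 4αk/q'² is constant
      have keyA : ∀ x ∈ I, HasDerivAt
          (fun y => g1 y + 4 * α * k / (2 * α * y + β) ^ 2) 0 x := by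
        intro x hx
        have dd : HasDerivAt (fun y => (2 * α * y + β) ^ 2)
            (2 * (2 * α * x + β) * (2 * α)) x := by
          have := (dq' x).pow 2
          refine this.congr_deriv (Eq.symm ?_); push_cast; ring
        have dinv := ((dd.inv (pow_ne_zero 2 (hq'ne x hx))).const_mul (4 * α * k))
        have := (dg1 x hx).add dinv
        refine this.congr_deriv (Eq.symm ?_)
        have hne := hq'ne x hx
        rw [eq_comm]
        field_simp
        have hne3 : (α * 2 * x + β) ^ 3 ≠ 0 := by rw [mul_comm α 2]; exact pow_ne_zero 3 hne
        rw [add_neg_eq_zero, eq_div_iff hne3]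
        linear_combination F1 x hx
      obtain ⟨c₁, hc₁_def⟩ : ∃ c, c = g1 p₀ + 4 * α * k / (2 * α * p₀ + β) ^ 2 := ⟨_, rfl⟩
      have hA : ∀ p ∈ I, g1 p + 4 * α * k / (2 * α * p + β) ^ 2 = c₁ := fun p hp =>
        (mongeAux_const hI hI' keyA hp hp₀).trans hc₁_def.symm
      have keyB : ∀ x ∈ I, HasDerivAt
          (fun y => G y - 2 * k / (2 * α * y + β) - c₁ * y) 0 x := by
        intro x hx
        have dinv := (((dq' x).inv (hq'ne x hx)).const_mul (2 * k))
        have := ((dG x hx).sub dinv).sub ((hasDerivAt_id x).const_mul c₁)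
        refine this.congr_deriv (Eq.symm ?_)
        have hAx := hA x hx
        have hne := hq'ne x hx
        rw [eq_comm]
        field_simp at hAx ⊢
        linear_combination hAx
      obtain ⟨c₀, hc₀_def⟩ : ∃ c, c = G p₀ - 2 * k / (2 * α * p₀ + β) - c₁ * p₀ := ⟨_, rfl⟩
      have hB : ∀ p ∈ I, G p - 2 * k / (2 * α * p + β) - c₁ * p = c₀ := fun p hp =>
        (mongeAux_const hI hI' keyB hp hp₀).trans hc₀_def.symm
      refine ⟨![0, α, -2 * α * c₁, β, -(β * c₁ + 2 * α * c₀), -(β * c₀) - 2 * k],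
        Function.ne_iff.mpr ⟨1, hα⟩, ?_⟩
      intro p hp
      show (0:ℝ) * G p ^ 2 + 2 * α * p * G p + (-2 * α * c₁) * p ^ 2
        + β * G p + (-(β * c₁ + 2 * α * c₀)) * p + (-(β * c₀) - 2 * k) = 0
      have hBp := hB p hp
      have hne := hq'ne p hp
      field_simp at hBp
      linear_combination hBp
  · -- D ≠ 0 : the central case
    set D : ℝ := 4 * α * γ - β ^ 2 with hD_def
    have keyA : ∀ x ∈ I, HasDerivAt
        (fun y => D * g1 y - 2 * (2 * α * y + β) * (h y * (α * y ^ 2 + β * y + γ))) 0 x := by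
      intro x hx
      have dprod : HasDerivAt (fun y => 2 * (2 * α * y + β) * (h y * (α * y ^ 2 + β * y + γ)))
          (2 * (2 * α) * (h x * (α * x ^ 2 + β * x + γ))
            + 2 * (2 * α * x + β) * (h1 x * (α * x ^ 2 + β * x + γ)
              + h x * (2 * α * x + β))) x := by
        have := (((dq' x).const_mul 2).mul ((dh x hx).mul (dq x)))
        refine this.congr_deriv (Eq.symm ?_) <;> simp only [Pi.mul_apply] <;> ring
      have := ((dg1 x hx).const_mul D).sub dprod
      refine this.congr_deriv (Eq.symm ?_)
      rw [eq_comm, sub_eq_zero]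
      linear_combination (-(2 * α * x + β)) * (R x hx)
    obtain ⟨c₁, hc₁_def⟩ :
        ∃ c, c = D * g1 p₀ - 2 * (2 * α * p₀ + β) * (h p₀ * (α * p₀ ^ 2 + β * p₀ + γ)) := ⟨_, rfl⟩
    have hA : ∀ p ∈ I, D * g1 p - 2 * (2 * α * p + β) * (h p * (α * p ^ 2 + β * p + γ)) = c₁ :=
      fun p hp => (mongeAux_const hI hI' keyA hp hp₀).trans hc₁_def.symm
    have keyB : ∀ x ∈ I, HasDerivAt
        (fun y => D * G y - 4 * (h y * (α * y ^ 2 + β * y + γ) ^ 2) - c₁ * y) 0 x := by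
      intro x hx
      have dprod : HasDerivAt (fun y => 4 * (h y * (α * y ^ 2 + β * y + γ) ^ 2))
          (4 * (h1 x * (α * x ^ 2 + β * x + γ) ^ 2
            + h x * (2 * (α * x ^ 2 + β * x + γ) * (2 * α * x + β)))) x := by
        have := ((dh x hx).mul ((dq x).pow 2)).const_mul 4
        refine this.congr_deriv (Eq.symm ?_); push_cast; simp only [Pi.pow_apply]; ring
      have := (((dG x hx).const_mul D).sub dprod).sub ((hasDerivAt_id x).const_mul c₁)
      refine this.congr_deriv (Eq.symm ?_)
      have hAx := hA x hx
      rw [eq_comm]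
      linear_combination hAx - (2 * (α * x ^ 2 + β * x + γ)) * (R x hx)
    obtain ⟨c₀, hc₀_def⟩ :
        ∃ c, c = D * G p₀ - 4 * (h p₀ * (α * p₀ ^ 2 + β * p₀ + γ) ^ 2) - c₁ * p₀ := ⟨_, rfl⟩
    have hB : ∀ p ∈ I, D * G p - 4 * (h p * (α * p ^ 2 + β * p + γ) ^ 2) - c₁ * p = c₀ :=
      fun p hp => (mongeAux_const hI hI' keyB hp hp₀).trans hc₀_def.symm
    refine ⟨![D ^ 2, -c₁ * D, c₁ ^ 2 - 16 * α, -2 * c₀ * D, 2 * c₀ * c₁ - 16 * β,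
      c₀ ^ 2 - 16 * γ], Function.ne_iff.mpr ⟨0, pow_ne_zero 2 hD⟩, ?_⟩
    intro p hp
    show D ^ 2 * G p ^ 2 + 2 * (-c₁ * D) * p * G p + (c₁ ^ 2 - 16 * α) * p ^ 2
      + (-2 * c₀ * D) * G p + (2 * c₀ * c₁ - 16 * β) * p + (c₀ ^ 2 - 16 * γ) = 0
    have hBp := hB p hp
    linear_combination (D * G p - c₁ * p - c₀ + 4 * (h p * (α * p ^ 2 + β * p + γ) ^ 2)) * hBp
      + 16 * (α * p ^ 2 + β * p + γ) * (hq1 p hp)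


/-- The Monge expression `M(G) = 40 G'''³ − 45 G'' G''' G'''' + 9 G''² G'''''`. -/
noncomputable def monge (G : ℝ → ℝ) (p : ℝ) : ℝ :=
  40 * (iteratedDeriv 3 G p) ^ 3
    - 45 * iteratedDeriv 2 G p * iteratedDeriv 3 G p * iteratedDeriv 4 G p
    + 9 * (iteratedDeriv 2 G p) ^ 2 * iteratedDeriv 5 G p

/-- If `G` is smooth with nowhere vanishing `G''` on an open interval and the
Monge expression of `G` vanishes identically, then locally near each point the graph of `G` is
contained in a (nontrivial) conic. -/
theorem monge_implies_conic
    (I : Set ℝ) (hI : IsOpen I) (hI' : Convex ℝ I)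
    (G : ℝ → ℝ) (hG : ContDiffOn ℝ (⊤ : ℕ∞) G I)
    (hnd : ∀ p ∈ I, iteratedDeriv 2 G p ≠ 0)
    (hmonge : ∀ p ∈ I, 40 * (iteratedDeriv 3 G p) ^ 3
      - 45 * iteratedDeriv 2 G p * iteratedDeriv 3 G p * iteratedDeriv 4 G p
      + 9 * (iteratedDeriv 2 G p) ^ 2 * iteratedDeriv 5 G p = 0) :
    ∀ p₀ ∈ I, ∃ J : Set ℝ, IsOpen J ∧ p₀ ∈ J ∧ J ⊆ I ∧
      ∃ a : Fin 6 → ℝ, a ≠ 0 ∧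
        ∀ p ∈ J, a 0 * G p ^ 2 + 2 * a 1 * p * G p + a 2 * p ^ 2
          + a 3 * G p + a 4 * p + a 5 = 0 := by
  have e1 : iteratedDeriv 1 G = deriv G := iteratedDeriv_one
  have e2 : iteratedDeriv 2 G = deriv (deriv G) := by
    rw [show (2:ℕ) = 1 + 1 from rfl, iteratedDeriv_succ, e1]
  have e3 : iteratedDeriv 3 G = deriv (deriv (deriv G)) := by
    rw [show (3:ℕ) = 2 + 1 from rfl, iteratedDeriv_succ, e2]
  have e4 : iteratedDeriv 4 G = deriv (deriv (deriv (deriv G))) := by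
    rw [show (4:ℕ) = 3 + 1 from rfl, iteratedDeriv_succ, e3]
  have e5 : iteratedDeriv 5 G = deriv (deriv (deriv (deriv (deriv G)))) := by
    rw [show (5:ℕ) = 4 + 1 from rfl, iteratedDeriv_succ, e4]
  simp only [e2] at hnd
  simp only [e2, e3, e4, e5] at hmonge
  intro p₀ hp₀
  obtain ⟨α, β, γ, hq⟩ := mongeAux_quadratic hI hI' hG hnd hmonge
  obtain ⟨a, ha, heq⟩ := mongeAux_conic hI hI' hG hnd hq hp₀
  exact ⟨I, hI, hp₀, subset_rfl, a, ha, heq⟩
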